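/- The constant sequence ρ_n = |1⟩⟨1| is a quantum sequential growth process (i.e., each ρ_n is a q-probability operator on H_n and the sequence is consistent), and its local q-measures are μ_n(A) = |⟨1, χ_A⟩|² = p_c^n(A)², the square of the classical path probability measure. -/

import Mathlib

/-- The inner product of L²(Ωₙ, 2^{Ωₙ}, p) for a finite sample space with weights p:
⟨f, g⟩ = Σ_ω p(ω) conj(f ω) g ω (conjugate-linear in the first argument). -/
noncomputable def winner {P : Type*} [Fintype P] (p : P → ℝ) (f g : P → ℂ) : ℂ :=
  ∑ ω, (p ω : ℂ) * (starRingEnd ℂ) (f ω) * g ω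

/-- The indicator function of a finite set of paths. -/
def ind {P : Type*} [DecidableEq P] (A : Finset P) : P → ℂ := fun ω => if ω ∈ A then 1 else 0

/-- The rank-one operator |1⟩⟨1| on L²(Ωₙ, 2^{Ωₙ}, p): f ↦ ⟨1, f⟩·1. -/
noncomputable def rhoOne {P : Type*} [Fintype P] (p : P → ℝ) (f : P → ℂ) : P → ℂ :=
  fun _ => winner p (fun _ => 1) f

/-- The weighted sum S p f = ∑ ω, p ω * f ω. -/
noncomputable def wsum {P : Type*} [Fintype P] (p : P → ℝ) (f : P → ℂ) : ℂ :=
  ∑ ω, (p ω : ℂ) * f ω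

lemma winner_rhoOne {P : Type*} [Fintype P] (p : P → ℝ) (f g : P → ℂ) :
    winner p f (rhoOne p g) = (starRingEnd ℂ) (wsum p f) * wsum p g := by
  simp only [winner, rhoOne, wsum, map_one, mul_one, map_sum, map_mul,
    Complex.conj_ofReal, ← Finset.sum_mul]

lemma wsum_ind {P : Type*} [Fintype P] [DecidableEq P] (p : P → ℝ) (A : Finset P) :
    wsum p (ind A) = ((∑ ω ∈ A, p ω : ℝ) : ℂ) := by
  simp [wsum, ind, mul_ite, Finset.sum_ite_mem, Finset.univ_inter]

theorem stmt19 (P : ℕ → Type*) [∀ n, Fintype (P n)] [∀ n, DecidableEq (P n)]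
    (ext : ∀ n, P (n + 1) → P n) (p : ∀ n, P n → ℝ) (ptrans : ∀ n, P (n + 1) → ℝ)
    (hp : ∀ n ω, 0 < p n ω)
    (hrel : ∀ n σ, p (n + 1) σ = p n (ext n σ) * ptrans n σ)
    (hsum : ∀ n (ω : P n), ∑ σ ∈ Finset.univ.filter (fun σ => ext n σ = ω), ptrans n σ = 1)
    (hprob : ∑ ω : P 0, p 0 ω = 1) :
    (∀ n (f : P n → ℂ),
      0 ≤ (winner (p n) f (rhoOne (p n) f)).re ∧ (winner (p n) f (rhoOne (p n) f)).im = 0) ∧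
    (∀ n (f g : P n → ℂ),
      winner (p n) f (rhoOne (p n) g) = (starRingEnd ℂ) (winner (p n) g (rhoOne (p n) f))) ∧
    (∀ n, winner (p n) (fun _ => 1) (rhoOne (p n) fun _ => 1) = 1) ∧
    (∀ n (ω ω' : P n),
      winner (p n) (ind {ω}) (rhoOne (p n) (ind {ω'})) =
        winner (p (n + 1)) (ind (Finset.univ.filter fun σ => ext n σ = ω))
          (rhoOne (p (n + 1)) (ind (Finset.univ.filter fun σ => ext n σ = ω')))) ∧
    (∀ n (A : Finset (P n)),
      winner (p n) (ind A) (rhoOne (p n) (ind A)) = (((∑ ω ∈ A, p n ω) ^ 2 : ℝ) : ℂ)) := by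
  have hfiber : ∀ n (ω : P n),
      ∑ σ ∈ Finset.univ.filter (fun σ => ext n σ = ω), p (n + 1) σ = p n ω := by
    intro n ω
    calc ∑ σ ∈ Finset.univ.filter (fun σ => ext n σ = ω), p (n + 1) σ
        = ∑ σ ∈ Finset.univ.filter (fun σ => ext n σ = ω), p n ω * ptrans n σ := by
          apply Finset.sum_congr rfl
          intro σ hσ
          rw [Finset.mem_filter] at hσ
          rw [hrel, hσ.2]
      _ = p n ω * ∑ σ ∈ Finset.univ.filter (fun σ => ext n σ = ω), ptrans n σ := by
          rw [Finset.mul_sum]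
      _ = p n ω := by rw [hsum]; ring
  have hmass : ∀ n, ∑ ω : P n, p n ω = 1 := by
    intro n
    induction n with
    | zero => exact hprob
    | succ m ih =>
      calc ∑ σ : P (m + 1), p (m + 1) σ
          = ∑ ω : P m, ∑ σ ∈ Finset.univ.filter (fun σ => ext m σ = ω), p (m + 1) σ := by
            rw [Finset.sum_fiberwise_eq_sum_filter]; simp
        _ = ∑ ω : P m, p m ω := by simp only [hfiber]
        _ = 1 := ih
  have hone : ∀ n, wsum (p n) (fun _ => 1) = 1 := by
    intro n
    simp only [wsum, mul_one]
    rw [← Complex.ofReal_sum, hmass]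
    simp
  refine ⟨?_, ?_, ?_, ?_, ?_⟩
  · intro n f
    rw [winner_rhoOne]
    constructor
    · simpa [Complex.normSq_eq_conj_mul_self, Complex.normSq_apply] using Complex.normSq_nonneg (wsum (p n) f)
    · have : (starRingEnd ℂ) (wsum (p n) f) * wsum (p n) f =
        ((Complex.normSq (wsum (p n) f) : ℝ) : ℂ) := by
        rw [Complex.normSq_eq_conj_mul_self]
      rw [this, Complex.ofReal_im]
  · intro n f g
    rw [winner_rhoOne, winner_rhoOne, map_mul, Complex.conj_conj, mul_comm]
  · intro n
    rw [winner_rhoOne, hone, map_one, one_mul]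
  · intro n ω ω'
    rw [winner_rhoOne, winner_rhoOne, wsum_ind, wsum_ind, wsum_ind, wsum_ind,
      hfiber, hfiber, Finset.sum_singleton, Finset.sum_singleton]
  · intro n A
    rw [winner_rhoOne, wsum_ind, Complex.conj_ofReal, ← Complex.ofReal_mul, sq]
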